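/- Let A : X → Y be uniformly convex with ‖A‖ ≤ 1 and modulus δ, let D ≥ 1, and let D_n be the n-th diamond graph with graph metric d, with top vertex t = (1,…,1) and bottom vertex b = (0,…,0). If f : D_n → X satisfies D^{-1} d(s,s') ≤ ‖Af(s) − Af(s')‖ ≤ ‖f(s) − f(s')‖ ≤ d(s,s') for all s, s' ∈ D_n, then there exist adjacent vertices s, s' in D_n with ‖f(t) − f(b)‖ ≤ 2^n (1 − δ(1/D))^n ‖f(s) − f(s')‖. Consequently D ≥ (1 − δ(1/D))^{-n}, so the diamond graphs {D_n} do not factor through a uniformly convex operator. -/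

import Mathlib

noncomputable section

/-- The modulus of convexity of an operator `A` with `‖A‖ ≤ 1`:
`δ(ε) = 1 − sup{ ‖(x₁+x₂)/2‖ : x₁,x₂ ∈ B_X, ‖(Ax₁ − Ax₂)/2‖ ≥ ε }`. -/
def convMod {X Y : Type*} [NormedAddCommGroup X] [NormedSpace ℝ X]
    [NormedAddCommGroup Y] [NormedSpace ℝ Y] (A : X →L[ℝ] Y) (ε : ℝ) : ℝ :=
  1 - sSup {r : ℝ | ∃ x₁ x₂ : X, ‖x₁‖ ≤ 1 ∧ ‖x₂‖ ≤ 1 ∧ ε ≤ ‖A x₁ - A x₂‖ / 2 ∧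
    r = ‖x₁ + x₂‖ / 2}

/-- An operator is uniformly convex if its modulus of convexity is positive everywhere. -/
def UniformlyConvexOp {X Y : Type*} [NormedAddCommGroup X] [NormedSpace ℝ X]
    [NormedAddCommGroup Y] [NormedSpace ℝ Y] (A : X →L[ℝ] Y) : Prop :=
  ∀ ε : ℝ, 0 < ε → 0 < convMod A ε

/-- The number of coordinates at which two bit strings (of the same length) differ. -/
def hammingDist' (s t : List Bool) : ℕ :=
  ((List.zip s t).filter (fun p => p.1 ≠ p.2)).length

/-- Adjacency in the Hamming graph: same length and differing in exactly one coordinate. -/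
def hammingAdj (s t : List Bool) : Prop :=
  s.length = t.length ∧ hammingDist' s t = 1

/-- The graph distance between `s` and `t` inside the vertex set `V`, with edges given by
Hamming adjacency. -/
noncomputable def graphDist (V : Set (List Bool)) (s t : List Bool) : ℕ :=
  sInf {k : ℕ | ∃ p : ℕ → List Bool, p 0 = s ∧ p k = t ∧ (∀ i ≤ k, p i ∈ V) ∧
    ∀ i < k, hammingAdj (p i) (p (i + 1))}

/-- The coordinate-doubling map. -/
def doubleList : List Bool → List Bool
  | [] => []
  | a :: s => a :: a :: doubleList s

/-- The coordinate-quadrupling map. -/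
def quadList : List Bool → List Bool
  | [] => []
  | a :: s => a :: a :: a :: a :: quadList s

/-- The vertex set of the `n`-th diamond graph `D_n ⊆ {0,1}^{2^n}`. -/
def diamondSet : ℕ → Set (List Bool)
  | 0 => {[false], [true]}
  | n + 1 =>
    (doubleList '' diamondSet n) ∪
      {s | s.length = 2 ^ (n + 1) ∧ ∃ t ∈ doubleList '' diamondSet n, hammingAdj s t}

/-- The six-vertex Laakso gadget. -/
def laaksoGadget : Set (List Bool) :=
  {[true, true, true, true], [true, true, false, true], [true, true, false, false],
    [false, true, false, true], [false, true, false, false], [false, false, false, false]}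

/-- The vertex set of the `n`-th Laakso graph `L_n ⊆ {0,1}^{4^n}`. -/
def laaksoSet : ℕ → Set (List Bool)
  | 0 => {[false], [true]}
  | n + 1 =>
    (quadList '' laaksoSet n) ∪
      {w | ∃ u v : List Bool, (u ++ [false] ++ v) ∈ laaksoSet n ∧
        (u ++ [true] ++ v) ∈ laaksoSet n ∧
        ∃ g ∈ laaksoGadget, w = quadList u ++ g ++ quadList v}

lemma hd_nil_left (t : List Bool) : hammingDist' [] t = 0 := by
  simp [hammingDist']

lemma hd_nil_right (s : List Bool) : hammingDist' s [] = 0 := by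
  simp [hammingDist']

lemma hd_cons (a b : Bool) (s t : List Bool) :
    hammingDist' (a :: s) (b :: t) = (if a = b then 0 else 1) + hammingDist' s t := by
  by_cases h : a = b <;> simp [hammingDist', h] <;> omega

lemma hd_comm (s t : List Bool) : hammingDist' s t = hammingDist' t s := by
  induction s generalizing t with
  | nil => simp [hd_nil_left, hd_nil_right]
  | cons a s ih =>
    cases t with
    | nil => simp [hd_nil_left, hd_nil_right]
    | cons b t =>
      rw [hd_cons, hd_cons, ih]
      by_cases h : a = b
      · simp [h]
      · have h' : ¬ b = a := fun hba => h hba.symm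
        simp [h, h']

lemma hd_eq_zero {s t : List Bool} (hl : s.length = t.length)
    (h : hammingDist' s t = 0) : s = t := by
  induction s generalizing t with
  | nil => cases t with
    | nil => rfl
    | cons b t => simp at hl
  | cons a s ih =>
    cases t with
    | nil => simp at hl
    | cons b t =>
      rw [hd_cons] at h
      by_cases hab : a = b
      · have h0 : hammingDist' s t = 0 := by simpa [hab] using h
        have := ih (t := t) (by simpa using hl) h0
        rw [hab, this]
      · simp [hab] at h

lemma hd_triangle {s t u : List Bool} (h1 : s.length = t.length)
    (h2 : t.length = u.length) :
    hammingDist' s u ≤ hammingDist' s t + hammingDist' t u := by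
  induction s generalizing t u with
  | nil =>
    simp [hd_nil_left]
  | cons a s ih =>
    cases t with
    | nil => simp at h1
    | cons b t =>
      cases u with
      | nil => simp at h2
      | cons c u =>
        rw [hd_cons, hd_cons, hd_cons]
        have := ih (t := t) (u := u) (by simpa using h1) (by simpa using h2)
        by_cases hab : a = b <;> by_cases hbc : b = c
        · simp [hab, hbc, hab.trans hbc]; omega
        · have : ¬ a = c := fun h => hbc (hab ▸ h)
          simp [hab, hbc, this]; omega
        · have : ¬ a = c := fun h => hab (h.trans hbc.symm)
          simp [hab, hbc, this]; omega
        · by_cases hac : a = c <;> simp [hab, hbc, hac] <;> omega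

lemma length_double (s : List Bool) : (doubleList s).length = 2 * s.length := by
  induction s with
  | nil => simp [doubleList]
  | cons a s ih => simp [doubleList, ih]; omega

lemma hd_double (s t : List Bool) :
    hammingDist' (doubleList s) (doubleList t) = 2 * hammingDist' s t := by
  induction s generalizing t with
  | nil => simp [doubleList, hd_nil_left]
  | cons a s ih =>
    cases t with
    | nil => simp [doubleList, hd_nil_right]
    | cons b t =>
      simp only [doubleList, hd_cons, ih]
      by_cases h : a = b <;> simp [h] <;> omega

lemma hammingAdj_symm {s t : List Bool} (h : hammingAdj s t) : hammingAdj t s :=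
  ⟨h.1.symm, by rw [hd_comm]; exact h.2⟩

lemma hd_self (s : List Bool) : hammingDist' s s = 0 := by
  induction s with
  | nil => simp [hd_nil_left]
  | cons a s ih => simp [hd_cons, ih]

lemma mid_exists {s t : List Bool} (hl : s.length = t.length)
    (h : hammingDist' s t = 1) :
    ∃ u v : List Bool, hammingAdj (doubleList s) u ∧ hammingAdj u (doubleList t) ∧
      hammingAdj (doubleList s) v ∧ hammingAdj v (doubleList t) ∧
      hammingDist' u v = 2 := by
  induction s generalizing t with
  | nil =>
    cases t with
    | nil => simp [hd_nil_left] at h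
    | cons b t => simp at hl
  | cons a s ih =>
    cases t with
    | nil => simp at hl
    | cons b t =>
      rw [hd_cons] at h
      by_cases hab : a = b
      · -- recurse
        have h' : hammingDist' s t = 1 := by simpa [hab] using h
        obtain ⟨u, v, h1, h2, h3, h4, h5⟩ := ih (by simpa using hl) h'
        refine ⟨a :: a :: u, a :: a :: v, ?_, ?_, ?_, ?_, ?_⟩
        · exact ⟨by simp [doubleList, h1.1], by simpa [doubleList, hd_cons] using h1.2⟩
        · exact ⟨by simp [doubleList, h2.1], by
            have hdd : doubleList (b :: t) = b :: b :: doubleList t := rfl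
            rw [hdd, hd_cons, hd_cons, ← hab]
            simpa using h2.2⟩
        · exact ⟨by simp [doubleList, h3.1], by simpa [doubleList, hd_cons] using h3.2⟩
        · exact ⟨by simp [doubleList, h4.1], by
            have hdd : doubleList (b :: t) = b :: b :: doubleList t := rfl
            rw [hdd, hd_cons, hd_cons, ← hab]
            simpa using h4.2⟩
        · simpa [hd_cons] using h5
      · -- heads differ; tails equal
        have h0 : hammingDist' s t = 0 := by simpa [hab] using h
        have hst : s = t := hd_eq_zero (by simpa using hl) h0
        subst hst
        refine ⟨b :: a :: doubleList s, a :: b :: doubleList s, ?_, ?_, ?_, ?_, ?_⟩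
        · exact ⟨by simp [doubleList, length_double], by
            simp [doubleList, hd_cons, hab, hd_self]⟩
        · exact ⟨by simp [doubleList, length_double], by
            have hba : ¬ b = a := fun hh => hab hh.symm
            simp [doubleList, hd_cons, hba, hd_self, hab]⟩
        · exact ⟨by simp [doubleList, length_double], by
            simp [doubleList, hd_cons, hab, hd_self]⟩
        · exact ⟨by simp [doubleList, length_double], by
            have hba : ¬ b = a := fun hh => hab hh.symm
            simp [doubleList, hd_cons, hba, hd_self, hab]⟩
        · have hba : ¬ b = a := fun hh => hab hh.symm
          simp [hd_cons, hab, hba, hd_self]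

lemma mem_double {m : ℕ} {s : List Bool} (h : s ∈ diamondSet m) :
    doubleList s ∈ diamondSet (m + 1) := Or.inl ⟨s, h, rfl⟩

lemma length_mem {m : ℕ} {s : List Bool} (h : s ∈ diamondSet m) :
    s.length = 2 ^ m := by
  induction m generalizing s with
  | zero =>
    rcases h with h | h <;> simp_all
  | succ n ih =>
    rcases h with ⟨t, ht, rfl⟩ | ⟨hl, -⟩
    · rw [length_double, ih ht]; ring
    · exact hl

lemma mid_mem {m : ℕ} {s u : List Bool} (hs : s ∈ diamondSet m)
    (h : hammingAdj (doubleList s) u) : u ∈ diamondSet (m + 1) := by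
  refine Or.inr ⟨?_, doubleList s, ⟨s, hs, rfl⟩, hammingAdj_symm h⟩
  rw [← h.1, length_double, length_mem hs]; ring

def IsPath (V : Set (List Bool)) (k : ℕ) (s t : List Bool) : Prop :=
  ∃ p : ℕ → List Bool, p 0 = s ∧ p k = t ∧ (∀ i ≤ k, p i ∈ V) ∧
    ∀ i < k, hammingAdj (p i) (p (i + 1))

lemma isPath_single {V : Set (List Bool)} {s t : List Bool} (hs : s ∈ V) (ht : t ∈ V)
    (h : hammingAdj s t) : IsPath V 1 s t := by
  refine ⟨fun i => if i = 0 then s else t, by simp, by simp, ?_, ?_⟩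
  · intro i _
    by_cases hi : i = 0 <;> simp [hi, hs, ht]
  · intro i hi
    interval_cases i
    simpa using h

lemma isPath_trans {V : Set (List Bool)} {k l : ℕ} {s t u : List Bool}
    (h1 : IsPath V k s t) (h2 : IsPath V l t u) : IsPath V (k + l) s u := by
  obtain ⟨p, hp0, hpk, hpm, hpa⟩ := h1
  obtain ⟨q, hq0, hql, hqm, hqa⟩ := h2
  refine ⟨fun i => if i < k then p i else q (i - k), ?_, ?_, ?_, ?_⟩
  · by_cases hk : 0 < k
    · simp [hk, hp0]
    · have hk0 : k = 0 := by omega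
      subst hk0
      simpa [hq0] using hpk.symm.trans hp0
  · have : ¬ k + l < k := by omega
    simp [this, hql]
  · intro i hi
    by_cases h : i < k
    · simp [h]; exact hpm i (by omega)
    · simp [h]; exact hqm (i - k) (by omega)
  · intro i hi
    by_cases h : i < k
    · by_cases h' : i + 1 < k
      · simpa [h, h'] using hpa i h
      · have : i + 1 = k := by omega
        have e : q (i + 1 - k) = p (i + 1) := by
          rw [this]; simp [hq0, ← hpk]
        simp only [h, if_pos, h', if_neg]
        simp [h, h', e]
        rw [hq0, ← hpk, ← this]
        exact hpa i h
    · have : ¬ i + 1 < k := by omega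
      simp [h, this]
      have := hqa (i - k) (by omega)
      have e : i - k + 1 = i + 1 - k := by omega
      rwa [e] at this

lemma isPath_double {m : ℕ} {a b : List Bool} (ha : a ∈ diamondSet m)
    (hb : b ∈ diamondSet m) (h : hammingAdj a b) :
    IsPath (diamondSet (m + 1)) 2 (doubleList a) (doubleList b) := by
  obtain ⟨u, v, h1, h2, h3, h4, h5⟩ := mid_exists h.1 h.2
  have hu : u ∈ diamondSet (m + 1) := mid_mem ha h1
  have : (1 : ℕ) + 1 = 2 := rfl
  rw [← this]
  exact isPath_trans (isPath_single (mem_double ha) hu h1)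
    (isPath_single hu (mem_double hb) h2)

lemma isPath_iterate {m j : ℕ} {a b : List Bool} (ha : a ∈ diamondSet m)
    (hb : b ∈ diamondSet m) (h : hammingAdj a b) :
    IsPath (diamondSet (m + j)) (2 ^ j) (doubleList^[j] a) (doubleList^[j] b) := by
  induction j generalizing m a b with
  | zero => simpa using isPath_single ha hb h
  | succ j ih =>
    obtain ⟨u, v, h1, h2, h3, h4, h5⟩ := mid_exists h.1 h.2
    have hu : u ∈ diamondSet (m + 1) := mid_mem ha h1
    have p1 := ih (mem_double ha) hu h1
    have p2 := ih hu (mem_double hb) h2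
    have e : m + (j + 1) = (m + 1) + j := by omega
    have e2 : (2 : ℕ) ^ (j + 1) = 2 ^ j + 2 ^ j := by ring
    rw [e, e2, Function.iterate_succ_apply, Function.iterate_succ_apply]
    exact isPath_trans p1 p2

lemma mem_iterate {m j : ℕ} {s : List Bool} (h : s ∈ diamondSet m) :
    doubleList^[j] s ∈ diamondSet (m + j) := by
  induction j with
  | zero => simpa using h
  | succ j ih => rw [Function.iterate_succ_apply']; exact mem_double ih

lemma graphDist_le {V : Set (List Bool)} {k : ℕ} {s t : List Bool}
    (h : IsPath V k s t) : graphDist V s t ≤ k := Nat.sInf_le h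

lemma hd_le_of_path {V : Set (List Bool)} {k : ℕ} {s t : List Bool}
    (h : IsPath V k s t) : hammingDist' s t ≤ k ∧ s.length = t.length := by
  obtain ⟨p, hp0, hpk, hm, hpa⟩ := h
  subst hp0; subst hpk
  clear hm
  induction k with
  | zero => simp [hd_self]
  | succ k ih =>
    have ih' := ih (fun i hi => hpa i (by omega))
    have ha := hpa k (by omega)
    constructor
    · calc hammingDist' (p 0) (p (k + 1)) ≤
          hammingDist' (p 0) (p k) + hammingDist' (p k) (p (k + 1)) :=
            hd_triangle ih'.2 ha.1
      _ ≤ k + 1 := by have := ih'.1; have := ha.2; omega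
    · exact ih'.2.trans ha.1

lemma le_graphDist {V : Set (List Bool)} {k : ℕ} {s t : List Bool}
    (hne : IsPath V k s t) : hammingDist' s t ≤ graphDist V s t := by
  refine le_csInf ⟨k, hne⟩ ?_
  intro b hb
  exact (hd_le_of_path hb).1

section ConvMod
variable {X Y : Type*} [NormedAddCommGroup X] [NormedSpace ℝ X]
  [NormedAddCommGroup Y] [NormedSpace ℝ Y] (A : X →L[ℝ] Y) (ε : ℝ)

lemma convMod_bddAbove : BddAbove {r : ℝ | ∃ x₁ x₂ : X, ‖x₁‖ ≤ 1 ∧ ‖x₂‖ ≤ 1 ∧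
    ε ≤ ‖A x₁ - A x₂‖ / 2 ∧ r = ‖x₁ + x₂‖ / 2} := by
  refine ⟨1, ?_⟩
  rintro r ⟨x₁, x₂, h1, h2, -, rfl⟩
  have := norm_add_le x₁ x₂
  linarith

lemma convMod_nonneg : 0 ≤ convMod A ε := by
  have : sSup {r : ℝ | ∃ x₁ x₂ : X, ‖x₁‖ ≤ 1 ∧ ‖x₂‖ ≤ 1 ∧
      ε ≤ ‖A x₁ - A x₂‖ / 2 ∧ r = ‖x₁ + x₂‖ / 2} ≤ 1 := by
    refine Real.sSup_le ?_ zero_le_one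
    rintro r ⟨x₁, x₂, h1, h2, -, rfl⟩
    have := norm_add_le x₁ x₂
    linarith
  unfold convMod
  linarith

lemma convMod_key {x₁ x₂ : X} (h1 : ‖x₁‖ ≤ 1) (h2 : ‖x₂‖ ≤ 1)
    (h3 : ε ≤ ‖A x₁ - A x₂‖ / 2) : ‖x₁ + x₂‖ / 2 ≤ 1 - convMod A ε := by
  have := le_csSup (convMod_bddAbove A ε) (a := ‖x₁ + x₂‖ / 2)
    ⟨x₁, x₂, h1, h2, h3, rfl⟩
  unfold convMod
  linarith

lemma convMod_le_one (h : ∃ x : X, ‖x‖ ≤ 1 ∧ ε ≤ ‖A x‖) : convMod A ε ≤ 1 := by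
  obtain ⟨x, hx, hAx⟩ := h
  have hmem : (0 : ℝ) ∈ {r : ℝ | ∃ x₁ x₂ : X, ‖x₁‖ ≤ 1 ∧ ‖x₂‖ ≤ 1 ∧
      ε ≤ ‖A x₁ - A x₂‖ / 2 ∧ r = ‖x₁ + x₂‖ / 2} := by
    refine ⟨x, -x, hx, by simpa using hx, ?_, by simp⟩
    have e : A x - A (-x) = (2 : ℝ) • A x := by
      rw [map_neg]; module
    rw [e, norm_smul]
    simp only [Real.norm_ofNat]
    linarith
  have := le_csSup (convMod_bddAbove A ε) hmem
  unfold convMod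
  linarith

end ConvMod

lemma hd_iterate (j : ℕ) (s t : List Bool) :
    hammingDist' (doubleList^[j] s) (doubleList^[j] t) = 2 ^ j * hammingDist' s t := by
  induction j generalizing s t with
  | zero => simp
  | succ j ih =>
    rw [Function.iterate_succ_apply, Function.iterate_succ_apply, ih, hd_double]
    ring

lemma double_replicate (k : ℕ) (c : Bool) :
    doubleList (List.replicate k c) = List.replicate (2 * k) c := by
  induction k with
  | zero => simp [doubleList]
  | succ k ih =>
    rw [List.replicate_succ, doubleList, ih]
    have : 2 * (k + 1) = (2 * k) + 1 + 1 := by ring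
    rw [this, List.replicate_succ, List.replicate_succ]

lemma iterate_replicate (j : ℕ) (c : Bool) :
    doubleList^[j] [c] = List.replicate (2 ^ j) c := by
  induction j with
  | zero => simp
  | succ j ih =>
    rw [Function.iterate_succ_apply', ih, double_replicate]
    congr 1
    ring

lemma pick_max {α : Type*} (g : α → ℝ) (p1 p2 p3 p4 : α) :
    ∃ q, (q = p1 ∨ q = p2 ∨ q = p3 ∨ q = p4) ∧
      g p1 ≤ g q ∧ g p2 ≤ g q ∧ g p3 ≤ g q ∧ g p4 ≤ g q := by
  rcases le_total (g p1) (g p2) with h1 | h1 <;>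
    rcases le_total (g p3) (g p4) with h2 | h2 <;>
      rcases le_total (g p2) (g p4) with h3 | h3 <;>
        rcases le_total (g p1) (g p3) with h4 | h4 <;>
          rcases le_total (g p2) (g p3) with h5 | h5 <;>
            rcases le_total (g p1) (g p4) with h6 | h6
  all_goals first
    | exact ⟨p1, by tauto, le_rfl, by linarith, by linarith, by linarith⟩
    | exact ⟨p2, by tauto, by linarith, le_rfl, by linarith, by linarith⟩
    | exact ⟨p3, by tauto, by linarith, by linarith, le_rfl, by linarith⟩
    | exact ⟨p4, by tauto, by linarith, by linarith, by linarith, le_rfl⟩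

section Main
variable {X Y : Type} [NormedAddCommGroup X] [NormedSpace ℝ X]
  [NormedAddCommGroup Y] [NormedSpace ℝ Y]

set_option maxHeartbeats 2000000 in
lemma diamond_claim (A : X →L[ℝ] Y) (D : ℝ) (hD : 1 ≤ D) (n : ℕ) (f : List Bool → X)
    (hf : ∀ s s', s ∈ diamondSet n → s' ∈ diamondSet n →
      D⁻¹ * (graphDist (diamondSet n) s s' : ℝ) ≤ ‖A (f s) - A (f s')‖ ∧
      ‖A (f s) - A (f s')‖ ≤ ‖f s - f s'‖ ∧
      ‖f s - f s'‖ ≤ (graphDist (diamondSet n) s s' : ℝ))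
    (hδ0 : 0 ≤ 1 - convMod A (1 / D)) (hδ1 : 1 - convMod A (1 / D) ≤ 1) :
    ∀ j, j ≤ n → ∀ a b, a ∈ diamondSet (n - j) → b ∈ diamondSet (n - j) →
      hammingAdj a b →
      ∃ e e', e ∈ diamondSet n ∧ e' ∈ diamondSet n ∧ hammingAdj e e' ∧
        ‖f (doubleList^[j] a) - f (doubleList^[j] b)‖ ≤
          2 ^ j * (1 - convMod A (1 / D)) ^ j * ‖f e - f e'‖ := by
  set δ := convMod A (1 / D) with hδdef
  intro j
  induction j with
  | zero =>
    intro hj a b ha hb hab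
    have hn : n - 0 = n := rfl
    rw [hn] at ha hb
    exact ⟨a, b, ha, hb, hab, by simp⟩
  | succ j ih =>
    intro hj a b ha hb hab
    have hm : n - j = (n - (j + 1)) + 1 := by omega
    set m := n - (j + 1) with hmdef
    rw [hm] at ih
    -- midpoints
    obtain ⟨u, v, h1, h2, h3, h4, h5⟩ := mid_exists hab.1 hab.2
    have hda : doubleList a ∈ diamondSet (m + 1) := mem_double ha
    have hdb : doubleList b ∈ diamondSet (m + 1) := mem_double hb
    have hu : u ∈ diamondSet (m + 1) := mid_mem ha h1
    have hv : v ∈ diamondSet (m + 1) := mid_mem ha h3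
    have hjn : j ≤ n := by omega
    -- apply induction hypothesis to the four edges
    obtain ⟨e1, e1', me1, me1', ae1, be1⟩ := ih hjn _ _ hda hu h1
    obtain ⟨e2, e2', me2, me2', ae2, be2⟩ := ih hjn _ _ hu hdb h2
    obtain ⟨e3, e3', me3, me3', ae3, be3⟩ := ih hjn _ _ hda hv h3
    obtain ⟨e4, e4', me4, me4', ae4, be4⟩ := ih hjn _ _ hv hdb h4
    -- pick the max pair
    obtain ⟨q, hq, hq1, hq2, hq3, hq4⟩ := pick_max (fun p => ‖f p.1 - f p.2‖)
      (e1, e1') (e2, e2') (e3, e3') (e4, e4')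
    have hqmem : q.1 ∈ diamondSet n ∧ q.2 ∈ diamondSet n ∧ hammingAdj q.1 q.2 := by
      rcases hq with rfl | rfl | rfl | rfl <;> exact ⟨by assumption, by assumption, by assumption⟩
    set E := ‖f q.1 - f q.2‖ with hEdef
    have hE0 : 0 ≤ E := norm_nonneg _
    set M := 2 ^ j * (1 - δ) ^ j * E with hMdef
    have hM0 : 0 ≤ M := by positivity
    have hCn : (0:ℝ) ≤ 2 ^ j * (1 - δ) ^ j := by positivity
    -- the four distances are at most M
    set T := f (doubleList^[j] (doubleList a)) with hTdef
    set B := f (doubleList^[j] (doubleList b)) with hBdef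
    set U := f (doubleList^[j] u) with hUdef
    set V := f (doubleList^[j] v) with hVdef
    have hTU : ‖T - U‖ ≤ M := le_trans be1 (by
      rw [hMdef]; exact mul_le_mul_of_nonneg_left hq1 hCn)
    have hUB : ‖U - B‖ ≤ M := le_trans be2 (by
      rw [hMdef]; exact mul_le_mul_of_nonneg_left hq2 hCn)
    have hTV : ‖T - V‖ ≤ M := le_trans be3 (by
      rw [hMdef]; exact mul_le_mul_of_nonneg_left hq3 hCn)
    have hVB : ‖V - B‖ ≤ M := le_trans be4 (by
      rw [hMdef]; exact mul_le_mul_of_nonneg_left hq4 hCn)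
    refine ⟨q.1, q.2, hqmem.1, hqmem.2.1, hqmem.2.2, ?_⟩
    rw [Function.iterate_succ_apply, Function.iterate_succ_apply]
    -- goal : ‖T - B‖ ≤ 2^(j+1) * (1-δ)^(j+1) * E
    have hgoal_eq : (2:ℝ) ^ (j+1) * (1 - δ) ^ (j+1) * E = 2 * M * (1 - δ) := by
      rw [hMdef]; ring
    rw [show f (doubleList^[j] (doubleList a)) = T from rfl,
        show f (doubleList^[j] (doubleList b)) = B from rfl, hgoal_eq]
    rcases le_or_gt M 0 with hMle | hMpos
    · -- degenerate case : M = 0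
      have hMeq : M = 0 := le_antisymm hMle hM0
      have e1 : T = U := by
        have := norm_sub_eq_zero_iff.mp (le_antisymm (hMeq ▸ hTU) (norm_nonneg _))
        exact this
      have e2 : U = B := by
        exact norm_sub_eq_zero_iff.mp (le_antisymm (hMeq ▸ hUB) (norm_nonneg _))
      rw [e1, e2, sub_self, norm_zero, hMeq]
      ring_nf
      exact le_rfl
    · -- main case
      -- lower bound on ‖A U - A V‖
      have hUV_mem : doubleList^[j] u ∈ diamondSet n ∧ doubleList^[j] v ∈ diamondSet n := by
        have h1' := mem_iterate (j := j) hu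
        have h2' := mem_iterate (j := j) hv
        have e : m + 1 + j = n := by omega
        rw [e] at h1' h2'
        exact ⟨h1', h2'⟩
      have hpath : IsPath (diamondSet n) (2 ^ (j + 1)) (doubleList^[j] u) (doubleList^[j] v) := by
        have p1 := isPath_iterate (j := j) hu hda (hammingAdj_symm h1)
        have p2 := isPath_iterate (j := j) hda hv h3
        have e : m + 1 + j = n := by omega
        rw [e] at p1 p2
        have := isPath_trans p1 p2
        have e2 : 2 ^ j + 2 ^ j = 2 ^ (j + 1) := by ring
        rwa [e2] at this
      have hdUV : hammingDist' (doubleList^[j] u) (doubleList^[j] v) = 2 ^ (j + 1) := by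
        rw [hd_iterate, h5]; ring
      have hgd : (2 : ℕ) ^ (j + 1) ≤ graphDist (diamondSet n) (doubleList^[j] u)
          (doubleList^[j] v) := by
        rw [← hdUV]
        exact le_graphDist hpath
      have hAUV : D⁻¹ * (2 : ℝ) ^ (j + 1) ≤ ‖A U - A V‖ := by
        have hD0 : (0:ℝ) < D := lt_of_lt_of_le one_pos hD
        have := (hf _ _ hUV_mem.1 hUV_mem.2).1
        refine le_trans ?_ this
        have : ((2:ℝ)) ^ (j+1) ≤ (graphDist (diamondSet n) (doubleList^[j] u)
            (doubleList^[j] v) : ℝ) := by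
          exact_mod_cast hgd
        exact mul_le_mul_of_nonneg_left this (by positivity)
      -- M ≤ 2 ^ j
      have hE1 : E ≤ 1 := by
        have hfq := (hf _ _ hqmem.1 hqmem.2.1).2.2
        have hgle : graphDist (diamondSet n) q.1 q.2 ≤ 1 :=
          graphDist_le (isPath_single hqmem.1 hqmem.2.1 hqmem.2.2)
        calc E ≤ (graphDist (diamondSet n) q.1 q.2 : ℝ) := hfq
          _ ≤ 1 := by exact_mod_cast hgle
      have hMle2j : M ≤ 2 ^ j := by
        have hp1 : (1 - δ) ^ j ≤ 1 := pow_le_one₀ hδ0 hδ1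
        have h := mul_le_mul (mul_le_mul_of_nonneg_left hp1
          (by positivity : (0:ℝ) ≤ 2 ^ j)) hE1 hE0
          (by positivity : (0:ℝ) ≤ 2 ^ j * 1)
        rw [hMdef]
        simpa using h
      have hMinv : (0:ℝ) < M⁻¹ := inv_pos.mpr hMpos
      have hD0 : (0:ℝ) < D := lt_of_lt_of_le one_pos hD
      -- the convexity condition for the pair (x₁, x₂)
      have hcond : ∀ w₁ w₂ : X, ‖w₁‖ ≤ M → ‖w₂‖ ≤ M → w₁ - w₂ = V - U →
          ‖w₁ + w₂‖ ≤ 2 * M * (1 - δ) := by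
        intro w₁ w₂ hw1 hw2 hw
        have hx1 : ‖M⁻¹ • w₁‖ ≤ 1 := by
          rw [norm_smul, Real.norm_eq_abs, abs_of_pos hMinv]
          calc M⁻¹ * ‖w₁‖ ≤ M⁻¹ * M := mul_le_mul_of_nonneg_left hw1 hMinv.le
            _ = 1 := inv_mul_cancel₀ hMpos.ne'
        have hx2 : ‖M⁻¹ • w₂‖ ≤ 1 := by
          rw [norm_smul, Real.norm_eq_abs, abs_of_pos hMinv]
          calc M⁻¹ * ‖w₂‖ ≤ M⁻¹ * M := mul_le_mul_of_nonneg_left hw2 hMinv.le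
            _ = 1 := inv_mul_cancel₀ hMpos.ne'
        have hAx : A (M⁻¹ • w₁) - A (M⁻¹ • w₂) = M⁻¹ • (A w₁ - A w₂) := by
          rw [map_smul, map_smul, smul_sub]
        have hAw : ‖A w₁ - A w₂‖ = ‖A U - A V‖ := by
          rw [← map_sub, hw, map_sub, norm_sub_rev]
        have hcond2 : 1 / D ≤ ‖A (M⁻¹ • w₁) - A (M⁻¹ • w₂)‖ / 2 := by
          rw [hAx, norm_smul, Real.norm_eq_abs, abs_of_pos hMinv, hAw]
          have k1 : M⁻¹ * (D⁻¹ * (2:ℝ) ^ (j+1)) ≤ M⁻¹ * ‖A U - A V‖ :=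
            mul_le_mul_of_nonneg_left hAUV hMinv.le
          have k2 : M⁻¹ * (D⁻¹ * (2 * M)) ≤ M⁻¹ * (D⁻¹ * (2:ℝ) ^ (j+1)) := by
            have : D⁻¹ * (2 * M) ≤ D⁻¹ * (2:ℝ) ^ (j+1) := by
              apply mul_le_mul_of_nonneg_left _ (by positivity)
              rw [pow_succ]
              linarith
            exact mul_le_mul_of_nonneg_left this hMinv.le
          have k3 : M⁻¹ * (D⁻¹ * (2 * M)) = 2 * D⁻¹ := by
            field_simp
          rw [one_div]
          linarith
        have := convMod_key A (1 / D) hx1 hx2 hcond2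
        rw [← smul_add, norm_smul, Real.norm_eq_abs, abs_of_pos hMinv] at this
        rw [← hδdef] at this
        have hc : M * (M⁻¹ * ‖w₁ + w₂‖) = ‖w₁ + w₂‖ := by
          field_simp
        nlinarith [mul_le_mul_of_nonneg_left this hMpos.le]
      have hNT : ‖(T - U) + (T - V)‖ ≤ 2 * M * (1 - δ) := by
        apply hcond _ _ hTU hTV
        abel
      have hNB : ‖(B - U) + (B - V)‖ ≤ 2 * M * (1 - δ) := by
        apply hcond _ _ (by rwa [norm_sub_rev] at hUB) (by rwa [norm_sub_rev] at hVB)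
        abel
      have key : (2:ℝ) * ‖T - B‖ ≤ 4 * M * (1 - δ) := by
        have e : ((T - U) + (T - V)) - ((B - U) + (B - V)) = (2:ℝ) • (T - B) := by
          module
        have h := norm_sub_le ((T - U) + (T - V)) ((B - U) + (B - V))
        rw [e, norm_smul, Real.norm_ofNat] at h
        linarith
      linarith
end Main

lemma exists_adj (n : ℕ) : ∃ e e', e ∈ diamondSet n ∧ e' ∈ diamondSet n ∧ hammingAdj e e' := by
  induction n with
  | zero =>
    exact ⟨[false], [true], by simp [diamondSet], by simp [diamondSet], rfl, by decide⟩
  | succ n ih =>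
    obtain ⟨e, e', he, he', hee⟩ := ih
    obtain ⟨u, v, h1, h2, h3, h4, h5⟩ := mid_exists hee.1 hee.2
    exact ⟨doubleList e, u, mem_double he, mid_mem he h1, h1⟩

lemma true_mem0 : [true] ∈ diamondSet 0 := by simp [diamondSet]
lemma false_mem0 : [false] ∈ diamondSet 0 := by simp [diamondSet]
lemma adj_tf : hammingAdj [true] [false] := ⟨rfl, by decide⟩

section Core
variable {X Y : Type} [NormedAddCommGroup X] [NormedSpace ℝ X]
  [NormedAddCommGroup Y] [NormedSpace ℝ Y]

lemma diamond_core (A : X →L[ℝ] Y) (D : ℝ) (hD : 1 ≤ D) (n : ℕ) (f : List Bool → X)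
    (hf : ∀ s s', s ∈ diamondSet n → s' ∈ diamondSet n →
      D⁻¹ * (graphDist (diamondSet n) s s' : ℝ) ≤ ‖A (f s) - A (f s')‖ ∧
      ‖A (f s) - A (f s')‖ ≤ ‖f s - f s'‖ ∧
      ‖f s - f s'‖ ≤ (graphDist (diamondSet n) s s' : ℝ)) :
    (∃ s s', s ∈ diamondSet n ∧ s' ∈ diamondSet n ∧ hammingAdj s s' ∧
      ‖f (List.replicate (2 ^ n) true) - f (List.replicate (2 ^ n) false)‖ ≤
        2 ^ n * (1 - convMod A (1 / D)) ^ n * ‖f s - f s'‖) ∧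
    D⁻¹ ≤ (1 - convMod A (1 / D)) ^ n ∧ 0 ≤ 1 - convMod A (1 / D) := by
  have hD0 : (0:ℝ) < D := lt_of_lt_of_le one_pos hD
  have edge_facts : ∀ e e', e ∈ diamondSet n → e' ∈ diamondSet n → hammingAdj e e' →
      ‖f e - f e'‖ ≤ 1 ∧ D⁻¹ ≤ ‖A (f e) - A (f e')‖ := by
    intro e e' he he' hee
    have hpath : IsPath (diamondSet n) 1 e e' := isPath_single he he' hee
    have hle : graphDist (diamondSet n) e e' ≤ 1 := graphDist_le hpath
    have hge : 1 ≤ graphDist (diamondSet n) e e' := by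
      have := le_graphDist hpath
      rwa [hee.2] at this
    have hfe := hf e e' he he'
    constructor
    · calc ‖f e - f e'‖ ≤ (graphDist (diamondSet n) e e' : ℝ) := hfe.2.2
        _ ≤ 1 := by exact_mod_cast hle
    · refine le_trans ?_ hfe.1
      have : (1:ℝ) ≤ (graphDist (diamondSet n) e e' : ℝ) := by exact_mod_cast hge
      nlinarith [inv_pos.mpr hD0]
  obtain ⟨e, e', he, he', hee⟩ := exists_adj n
  obtain ⟨hne1, hAe⟩ := edge_facts e e' he he' hee
  have hδ1 : convMod A (1 / D) ≤ 1 := by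
    refine convMod_le_one A (1 / D) ⟨f e - f e', hne1, ?_⟩
    rw [map_sub, one_div]
    exact hAe
  have hδ0 : 0 ≤ convMod A (1 / D) := convMod_nonneg A (1 / D)
  have hδ0' : 0 ≤ 1 - convMod A (1 / D) := by linarith
  have hδ1' : 1 - convMod A (1 / D) ≤ 1 := by linarith
  have h0 : [true] ∈ diamondSet (n - n) ∧ [false] ∈ diamondSet (n - n) := by
    rw [Nat.sub_self]
    exact ⟨true_mem0, false_mem0⟩
  obtain ⟨s, s', hs, hs', hss, hb⟩ :=
    diamond_claim A D hD n f hf hδ0' hδ1' n le_rfl [true] [false] h0.1 h0.2 adj_tf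
  rw [iterate_replicate, iterate_replicate] at hb
  refine ⟨⟨s, s', hs, hs', hss, hb⟩, ?_, hδ0'⟩
  have htmem : List.replicate (2 ^ n) true ∈ diamondSet n := by
    have := mem_iterate (m := 0) (j := n) true_mem0
    rwa [Nat.zero_add, iterate_replicate] at this
  have hbmem : List.replicate (2 ^ n) false ∈ diamondSet n := by
    have := mem_iterate (m := 0) (j := n) false_mem0
    rwa [Nat.zero_add, iterate_replicate] at this
  have hpath : IsPath (diamondSet n) (2 ^ n)
      (List.replicate (2 ^ n) true) (List.replicate (2 ^ n) false) := by
    have := isPath_iterate (m := 0) (j := n) true_mem0 false_mem0 adj_tf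
    rwa [Nat.zero_add, iterate_replicate, iterate_replicate] at this
  have hgd : (2:ℕ) ^ n ≤ graphDist (diamondSet n)
      (List.replicate (2 ^ n) true) (List.replicate (2 ^ n) false) := by
    have h := le_graphDist hpath
    have e2 : hammingDist' (List.replicate (2 ^ n) true) (List.replicate (2 ^ n) false)
        = 2 ^ n := by
      have h3 := hd_iterate n [true] [false]
      rw [iterate_replicate, iterate_replicate] at h3
      rw [h3]
      have h4 : hammingDist' [true] [false] = 1 := by decide
      rw [h4]; ring
    rwa [e2] at h
  have hftb := hf _ _ htmem hbmem
  have hss1 : ‖f s - f s'‖ ≤ 1 := (edge_facts s s' hs hs' hss).1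
  have hchain : D⁻¹ * (2:ℝ) ^ n ≤ 2 ^ n * (1 - convMod A (1 / D)) ^ n := by
    have c1 : D⁻¹ * (2:ℝ) ^ n ≤ D⁻¹ * (graphDist (diamondSet n)
        (List.replicate (2 ^ n) true) (List.replicate (2 ^ n) false) : ℝ) := by
      apply mul_le_mul_of_nonneg_left _ (by positivity)
      exact_mod_cast hgd
    have c2 : 2 ^ n * (1 - convMod A (1 / D)) ^ n * ‖f s - f s'‖ ≤
        2 ^ n * (1 - convMod A (1 / D)) ^ n := by
      have hc : (0:ℝ) ≤ 2 ^ n * (1 - convMod A (1 / D)) ^ n := by positivity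
      nlinarith [norm_nonneg (f s - f s')]
    linarith [hftb.1, hftb.2.1, hftb.2.2, hb]
  have h2n : (0:ℝ) < 2 ^ n := by positivity
  nlinarith [hchain]

lemma part1_lemma (A : X →L[ℝ] Y) (D : ℝ) (hD : 1 ≤ D) (n : ℕ) (f : List Bool → X)
    (hf : ∀ s s', s ∈ diamondSet n → s' ∈ diamondSet n →
      D⁻¹ * (graphDist (diamondSet n) s s' : ℝ) ≤ ‖A (f s) - A (f s')‖ ∧
      ‖A (f s) - A (f s')‖ ≤ ‖f s - f s'‖ ∧
      ‖f s - f s'‖ ≤ (graphDist (diamondSet n) s s' : ℝ)) :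
    (∃ s s', s ∈ diamondSet n ∧ s' ∈ diamondSet n ∧ hammingAdj s s' ∧
      ‖f (List.replicate (2 ^ n) true) - f (List.replicate (2 ^ n) false)‖ ≤
        2 ^ n * (1 - convMod A (1 / D)) ^ n * ‖f s - f s'‖) ∧
    ((1 - convMod A (1 / D))⁻¹) ^ n ≤ D := by
  obtain ⟨hmain, hcore, hδ0'⟩ := diamond_core A D hD n f hf
  refine ⟨hmain, ?_⟩
  rcases Nat.eq_zero_or_pos n with rfl | hn
  · simpa using hD
  · have hD0 : (0:ℝ) < D := lt_of_lt_of_le one_pos hD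
    have h1δ : 0 < 1 - convMod A (1 / D) := by
      rcases lt_or_eq_of_le hδ0' with h | h
      · exact h
      · exfalso
        rw [← h] at hcore
        rw [zero_pow (by omega)] at hcore
        have : (0:ℝ) < D⁻¹ := inv_pos.mpr hD0
        linarith
    rw [inv_pow]
    have := inv_anti₀ (inv_pos.mpr hD0) hcore
    rwa [inv_inv] at this
end Core

theorem statement10 :
    (∀ (X Y : Type) [NormedAddCommGroup X] [NormedSpace ℝ X] [CompleteSpace X]
      [NormedAddCommGroup Y] [NormedSpace ℝ Y] [CompleteSpace Y] (A : X →L[ℝ] Y),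
      ‖A‖ ≤ 1 → UniformlyConvexOp A → ∀ D : ℝ, 1 ≤ D → ∀ (n : ℕ) (f : List Bool → X),
      (∀ s s', s ∈ diamondSet n → s' ∈ diamondSet n →
        D⁻¹ * (graphDist (diamondSet n) s s' : ℝ) ≤ ‖A (f s) - A (f s')‖ ∧
        ‖A (f s) - A (f s')‖ ≤ ‖f s - f s'‖ ∧
        ‖f s - f s'‖ ≤ (graphDist (diamondSet n) s s' : ℝ)) →
      (∃ s s', s ∈ diamondSet n ∧ s' ∈ diamondSet n ∧ hammingAdj s s' ∧
        ‖f (List.replicate (2 ^ n) true) - f (List.replicate (2 ^ n) false)‖ ≤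
          2 ^ n * (1 - convMod A (1 / D)) ^ n * ‖f s - f s'‖) ∧
      ((1 - convMod A (1 / D))⁻¹) ^ n ≤ D) ∧
    (∀ (X Y : Type) [NormedAddCommGroup X] [NormedSpace ℝ X] [CompleteSpace X]
      [NormedAddCommGroup Y] [NormedSpace ℝ Y] [CompleteSpace Y] (A : X →L[ℝ] Y),
      ‖A‖ ≤ 1 → UniformlyConvexOp A →
      ¬ ∃ D : ℝ, 1 ≤ D ∧ ∀ n : ℕ, ∃ f : List Bool → X,
        ∀ s s', s ∈ diamondSet n → s' ∈ diamondSet n →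
          D⁻¹ * (graphDist (diamondSet n) s s' : ℝ) ≤ ‖A (f s) - A (f s')‖ ∧
          ‖A (f s) - A (f s')‖ ≤ ‖f s - f s'‖ ∧
          ‖f s - f s'‖ ≤ (graphDist (diamondSet n) s s' : ℝ)) := by
  constructor
  · intro X Y _ _ _ _ _ _ A _ _ D hD n f hf
    exact part1_lemma A D hD n f hf
  · intro X Y _ _ _ _ _ _ A _ hUC
    rintro ⟨D, hD, hall⟩
    have hD0 : (0:ℝ) < D := lt_of_lt_of_le one_pos hD
    have hδpos : 0 < convMod A (1 / D) := hUC (1 / D) (by positivity)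
    obtain ⟨f1, hf1⟩ := hall 1
    obtain ⟨-, hcore1, hδ0'⟩ := diamond_core A D hD 1 f1 hf1
    rw [pow_one] at hcore1
    have h1δ : 0 < 1 - convMod A (1 / D) := by
      rcases lt_or_eq_of_le hδ0' with h | h
      · exact h
      · exfalso
        have : (0:ℝ) < D⁻¹ := inv_pos.mpr hD0
        linarith
    have hc : 1 < (1 - convMod A (1 / D))⁻¹ := (one_lt_inv₀ h1δ).mpr (by linarith)
    obtain ⟨k, hk⟩ := pow_unbounded_of_one_lt D hc
    obtain ⟨fk, hfk⟩ := hall k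
    have := (part1_lemma A D hD k fk hfk).2
    linarith
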